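/- Let (G, τ) be a Hausdorff ω-narrow first-countable SIN paratopological group. Then there exist a second-countable metrizable topological group H and a continuous bijective group homomorphism from G onto H. -/

import Mathlib

open Topology Pointwise

section Aux

open Filter Set

variable {G : Type*} [Group G] [TopologicalSpace G]

/-- The invariant core of a set. -/
def invCore (A : Set G) : Set G := {g | ∀ x : G, x * g * x⁻¹ ∈ A}

theorem invCore_subset (A : Set G) : invCore A ⊆ A := fun g hg => by
  simpa using hg 1

theorem invCore_conj {A : Set G} {g : G} (hg : g ∈ invCore A) (x : G) :
    x * g * x⁻¹ ∈ invCore A := fun y => by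
  have := hg (y * x)
  simpa [mul_assoc, mul_inv_rev] using this

theorem invCore_mem_nhds
    (hSIN : ∀ U ∈ 𝓝 (1 : G), ∃ V ∈ 𝓝 (1 : G), ∀ x : G, ∀ v ∈ V, x * v * x⁻¹ ∈ U)
    {A : Set G} (hA : A ∈ 𝓝 (1 : G)) : invCore A ∈ 𝓝 (1 : G) := by
  obtain ⟨V, hV, h⟩ := hSIN A hA
  exact Filter.mem_of_superset hV (fun v hv x => h x v hv)

variable [ContinuousMul G]

open Classical in
/-- A decreasing sequence of invariant neighborhoods. -/
noncomputable def seqS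
    (hSIN : ∀ U ∈ 𝓝 (1 : G), ∃ V ∈ 𝓝 (1 : G), ∀ x : G, ∀ v ∈ V, x * v * x⁻¹ ∈ U)
    (U : ℕ → Set G) : ℕ → Set G
  | 0 => invCore (U 0)
  | n + 1 =>
    invCore (if h : seqS hSIN U n ∩ U (n + 1) ∈ 𝓝 (1 : G) then
      (exists_nhds_one_split h).choose else Set.univ)

theorem seqS_spec
    (hSIN : ∀ U ∈ 𝓝 (1 : G), ∃ V ∈ 𝓝 (1 : G), ∀ x : G, ∀ v ∈ V, x * v * x⁻¹ ∈ U)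
    {U : ℕ → Set G} (hU : ∀ n, U n ∈ 𝓝 (1 : G)) (n : ℕ) :
    seqS hSIN U n ∈ 𝓝 (1 : G) ∧ seqS hSIN U n ⊆ U n ∧
      (∀ g ∈ seqS hSIN U n, ∀ x : G, x * g * x⁻¹ ∈ seqS hSIN U n) ∧
      (∀ m, n = m + 1 → seqS hSIN U n ⊆ seqS hSIN U m ∧
        ∀ a ∈ seqS hSIN U n, ∀ b ∈ seqS hSIN U n, a * b ∈ seqS hSIN U m) := by
  induction n with
  | zero =>
    refine ⟨invCore_mem_nhds hSIN (hU 0), invCore_subset _,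
      fun g hg x => invCore_conj hg x, fun m hm => by omega⟩
  | succ n ih =>
    have h : seqS hSIN U n ∩ U (n + 1) ∈ 𝓝 (1 : G) := Filter.inter_mem ih.1 (hU (n + 1))
    have hdef : seqS hSIN U (n + 1) =
        invCore (exists_nhds_one_split h).choose := by
      rw [seqS, dif_pos h]
    set W := (exists_nhds_one_split h).choose with hW
    obtain ⟨hWmem, hWmul⟩ := (exists_nhds_one_split h).choose_spec
    have hWsub : W ⊆ seqS hSIN U n ∩ U (n + 1) := fun w hw => by
      simpa using hWmul 1 (mem_of_mem_nhds hWmem) w hw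
    rw [hdef]
    refine ⟨invCore_mem_nhds hSIN hWmem,
      fun g hg => (hWsub (invCore_subset _ hg)).2,
      fun g hg x => invCore_conj hg x, ?_⟩
    rintro m hm
    have hmn : m = n := by omega
    subst hmn
    constructor
    · exact fun g hg => (hWsub (invCore_subset _ hg)).1
    · intro a ha b hb
      exact (hWmul a (invCore_subset _ ha) b (invCore_subset _ hb)).1

end Aux

/-- A continuous bijective group homomorphism from `G` onto a second-countable
metrizable topological group. -/
structure ContinuousIsoOntoSecondCountableMetrizableGroup
    (G : Type*) [Group G] [TopologicalSpace G] where
  H : Type*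
  [group : Group H]
  [top : TopologicalSpace H]
  secondCountable : SecondCountableTopology H
  metrizable : TopologicalSpace.MetrizableSpace H
  topologicalGroup : IsTopologicalGroup H
  φ : G →* H
  continuous : Continuous φ
  bijective : Function.Bijective φ

theorem aux_metrizable_secondCountable {G : Type*} [Group G] [t' : TopologicalSpace G]
    [IsTopologicalGroup G] [(𝓝 (1 : G)).IsCountablyGenerated] [T2Space G]
    [TopologicalSpace.SeparableSpace G] :
    TopologicalSpace.MetrizableSpace G ∧ SecondCountableTopology G := by
  letI u : UniformSpace G := IsTopologicalGroup.rightUniformSpace G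
  haveI : (uniformity G).IsCountablyGenerated := by
    rw [uniformity_eq_comap_nhds_one' G]
    exact Filter.comap.isCountablyGenerated _ _
  exact ⟨UniformSpace.metrizableSpace, UniformSpace.secondCountable_of_separable G⟩

theorem aux_dense {G : Type*} [Group G] (fb : GroupFilterBasis G) (D : Set G)
    (h : ∀ x : G, ∀ V ∈ fb, ∃ f ∈ D, f ∈ (x * ·) '' V) :
    @Dense G fb.topology D := by
  letI := fb.topology
  intro x
  rw [mem_closure_iff_nhds_basis (fb.nhds_hasBasis x)]
  intro V hV
  exact h x V hV

theorem aux_small {K : Type u} [TopologicalSpace K] [TopologicalSpace.MetrizableSpace K]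
    [SecondCountableTopology K] : Small.{v} K := by
  letI := TopologicalSpace.metrizableSpaceMetric K
  exact small_of_injective (kuratowskiEmbedding.isometry K).injective

theorem aux_build {K : Type u} [Small.{v} K] [Group K] [TopologicalSpace K] [IsTopologicalGroup K]
    [SecondCountableTopology K] [TopologicalSpace.MetrizableSpace K] :
    ∃ tH : TopologicalSpace (Shrink.{v} K),
      @SecondCountableTopology (Shrink.{v} K) tH ∧
      @TopologicalSpace.MetrizableSpace (Shrink.{v} K) tH ∧
      @IsTopologicalGroup (Shrink.{v} K) tH _ ∧
      @Continuous K (Shrink.{v} K) _ tH (equivShrink K) := by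
  let ψ : Shrink.{v} K ≃* K := Shrink.mulEquiv
  letI tH : TopologicalSpace (Shrink.{v} K) := TopologicalSpace.induced ψ inferInstance
  have hind : Topology.IsInducing (ψ.toMonoidHom : Shrink.{v} K → K) := ⟨rfl⟩
  have hemb : Topology.IsEmbedding (ψ.toMonoidHom : Shrink.{v} K → K) := ⟨hind, ψ.injective⟩
  refine ⟨tH, hind.secondCountableTopology, hemb.metrizableSpace,
    hind.topologicalGroup ψ.toMonoidHom, ?_⟩
  apply continuous_induced_rng.2
  have h : ((ψ : Shrink.{v} K → K) ∘ (equivShrink K)) = id := by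
    funext x
    simp [ψ, Shrink.mulEquiv]
  rw [h]
  exact continuous_id

theorem aux_final {G : Type u} [Group G] [amb : TopologicalSpace G]
    (t' : TopologicalSpace G) (tg : @IsTopologicalGroup G t' _)
    (hsc : @SecondCountableTopology G t') (hmet : @TopologicalSpace.MetrizableSpace G t')
    (hcont : @Continuous G G amb t' id) :
    Nonempty (@ContinuousIsoOntoSecondCountableMetrizableGroup.{u, v} G _ amb) := by
  haveI hsmall : Small.{v} G := @aux_small G t' hmet hsc
  obtain ⟨tH, hsc', hmet', tg', hcont'⟩ := @aux_build G hsmall _ t' tg hsc hmet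
  have hφ : ⇑((Shrink.mulEquiv : Shrink.{v} G ≃* G).symm.toMonoidHom) =
      ⇑(equivShrink G : G ≃ Shrink.{v} G) := by
    funext x
    simp [Shrink.mulEquiv, Equiv.mulEquiv_symm_apply]
  refine ⟨@ContinuousIsoOntoSecondCountableMetrizableGroup.mk G _ amb (Shrink.{v} G) _ tH
    hsc' hmet' tg' (Shrink.mulEquiv : Shrink.{v} G ≃* G).symm.toMonoidHom ?_ ?_⟩
  · rw [hφ]
    have := @Continuous.comp G G (Shrink.{v} G) amb t' tH _ _ hcont' hcont
    simpa using this
  · rw [hφ]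
    exact (equivShrink G).bijective

/-- Let `(G, τ)` be a Hausdorff ω-narrow first-countable SIN paratopological group.
Then there exist a second-countable metrizable topological group `H` and a continuous
bijective group homomorphism from `G` onto `H`. -/
theorem hausdorff_omegaNarrow_SIN_firstCountable_continuous_iso
    {G : Type*} [Group G] [TopologicalSpace G] [T2Space G] [ContinuousMul G]
    [FirstCountableTopology G]
    (hnarrow : ∀ U ∈ 𝓝 (1 : G), ∃ F : Set G, F.Countable ∧
      (Set.univ : Set G) ⊆ F * U ∧ (Set.univ : Set G) ⊆ U * F)
    (hSIN : ∀ U ∈ 𝓝 (1 : G), ∃ V ∈ 𝓝 (1 : G), ∀ x : G, ∀ v ∈ V, x * v * x⁻¹ ∈ U) :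
    Nonempty (ContinuousIsoOntoSecondCountableMetrizableGroup G) := by
  classical
  rename_i amb inst2 instm instfc
  obtain ⟨U, hUb⟩ := (𝓝 (1 : G)).exists_antitone_basis
  have hU : ∀ n, U n ∈ 𝓝 (1 : G) := fun n => hUb.1.mem_of_mem trivial
  set S : ℕ → Set G := seqS hSIN U with hSdef
  have hS := seqS_spec hSIN hU
  have hSmem : ∀ n, S n ∈ 𝓝 (1 : G) := fun n => (hS n).1
  have hSone : ∀ n, (1 : G) ∈ S n := fun n => mem_of_mem_nhds (hSmem n)
  have hSsubU : ∀ n, S n ⊆ U n := fun n => (hS n).2.1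
  have hSconj : ∀ n, ∀ g ∈ S n, ∀ x : G, x * g * x⁻¹ ∈ S n := fun n => (hS n).2.2.1
  have hSstep : ∀ n, S (n + 1) ⊆ S n := fun n => ((hS (n + 1)).2.2.2 n rfl).1
  have hSmul : ∀ n, ∀ a ∈ S (n + 1), ∀ b ∈ S (n + 1), a * b ∈ S n :=
    fun n => ((hS (n + 1)).2.2.2 n rfl).2
  have hSanti : ∀ {m n}, m ≤ n → S n ⊆ S m := by
    intro m n h
    induction h with
    | refl => exact subset_rfl
    | step _ ih => exact (hSstep _).trans ih
  -- the symmetric sets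
  set Bs : ℕ → Set G := fun n => S n * (S n)⁻¹ with hBdef
  have hSsubB : ∀ n, S n ⊆ Bs n := fun n s hs =>
    ⟨s, hs, 1⁻¹, by simpa using hSone n, by simp⟩
  have hSinvsubB : ∀ n, (S n)⁻¹ ⊆ Bs n := fun n s hs =>
    ⟨1, hSone n, s, hs, by simp⟩
  have hBone : ∀ n, (1 : G) ∈ Bs n := fun n => hSsubB n (hSone n)
  have hBanti : ∀ {m n}, m ≤ n → Bs n ⊆ Bs m := fun {m n} h =>
    Set.mul_subset_mul (hSanti h) (Set.inv_subset_inv.mpr (hSanti h))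
  have hBconj : ∀ n, ∀ g ∈ Bs n, ∀ x : G, x * g * x⁻¹ ∈ Bs n := by
    rintro n g ⟨s, hs, t, ht, rfl⟩ x
    refine ⟨x * s * x⁻¹, hSconj n s hs x, x * t * x⁻¹, ?_, by group⟩
    rw [Set.mem_inv] at ht ⊢
    have := hSconj n _ ht x
    simpa [mul_inv_rev, mul_assoc] using this
  have hBinv : ∀ n, ∀ g ∈ Bs n, g⁻¹ ∈ Bs n := by
    rintro n g ⟨s, hs, t, ht, rfl⟩
    exact ⟨t⁻¹, Set.mem_inv.mp ht, s⁻¹, Set.inv_mem_inv.mpr hs, by group⟩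
  have hBmul : ∀ n, ∀ a ∈ Bs (n + 1), ∀ b ∈ Bs (n + 1), a * b ∈ Bs n := by
    rintro n a ⟨s₁, hs₁, t₁, ht₁, rfl⟩ b ⟨s₂, hs₂, t₂, ht₂, rfl⟩
    rw [Set.mem_inv] at ht₁ ht₂
    refine ⟨s₁ * (t₁ * s₂ * t₁⁻¹), hSmul n _ hs₁ _ (hSconj (n + 1) s₂ hs₂ t₁),
      t₁ * t₂, ?_, by group⟩
    rw [Set.mem_inv, mul_inv_rev]
    exact hSmul n _ ht₂ _ ht₁
  -- ambient-topology facts needed later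
  have hsepfun : ∀ x : G, x ≠ 1 → ∃ n, x ∉ Bs n := by
    intro x hx
    obtain ⟨A, C, hAo, hCo, hxA, h1C, hAC⟩ := t2_separation hx
    have hN : ((x * ·) ⁻¹' A) ∩ C ∈ 𝓝 (1 : G) := by
      refine Filter.inter_mem ?_ (hCo.mem_nhds h1C)
      have hco : ContinuousAt (x * ·) (1 : G) :=
        (continuous_const.mul continuous_id).continuousAt
      exact hco.preimage_mem_nhds (by simpa using hAo.mem_nhds hxA)
    obtain ⟨n, -, hn⟩ := hUb.1.mem_iff.mp hN
    refine ⟨n, ?_⟩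
    rintro ⟨s, hs, t, ht, rfl⟩
    have htS : t⁻¹ ∈ S n := Set.mem_inv.mp ht
    have hbN : t⁻¹ ∈ ((s * t * ·) ⁻¹' A) ∩ C := hn (hSsubU n htS)
    have hsN : s ∈ ((s * t * ·) ⁻¹' A) ∩ C := hn (hSsubU n hs)
    have hsA : s ∈ A := by
      have := hbN.1
      simpa [Set.mem_preimage, mul_assoc] using this
    exact hAC.le_bot ⟨hsA, hsN.2⟩
  have hxS : ∀ (x : G) (n : ℕ), (x * ·) '' S n ∈ 𝓝 x := by
    intro x n
    have hc : ContinuousAt (x⁻¹ * ·) x :=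
      (continuous_const.mul continuous_id).continuousAt
    have hpre : (x⁻¹ * ·) ⁻¹' S n ∈ 𝓝 x :=
      hc.preimage_mem_nhds (by simpa using hSmem n)
    refine Filter.mem_of_superset hpre ?_
    intro y hy
    exact ⟨x⁻¹ * y, hy, by simp⟩
  choose F hFc hF1 hF2 using fun n => hnarrow (S n) (hSmem n)
  have hDpoint : ∀ (x : G) (n : ℕ), ∃ f ∈ ⋃ m, F m, f ∈ (x * ·) '' Bs n := by
    intro x n
    obtain ⟨u, hu, f, hf, hx⟩ := hF2 n (Set.mem_univ x)
    refine ⟨f, Set.mem_iUnion.mpr ⟨n, hf⟩, x⁻¹ * u⁻¹ * x, ?_, ?_⟩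
    · have h1 : x⁻¹ * u * x ∈ S n := by simpa using hSconj n u hu x⁻¹
      have h2 : (x⁻¹ * u * x)⁻¹ ∈ (S n)⁻¹ := Set.inv_mem_inv.mpr h1
      have h3 : x⁻¹ * u⁻¹ * x ∈ (S n)⁻¹ := by
        simpa [mul_inv_rev, mul_assoc] using h2
      exact hSinvsubB n h3
    · rw [← hx]; group
  -- the group filter basis
  let fb : GroupFilterBasis G :=
    { sets := Set.range Bs
      nonempty := Set.range_nonempty _
      inter_sets := by
        rintro _ _ ⟨n, rfl⟩ ⟨m, rfl⟩
        exact ⟨Bs (max n m), ⟨max n m, rfl⟩,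
          Set.subset_inter (hBanti (le_max_left n m)) (hBanti (le_max_right n m))⟩
      one' := by rintro _ ⟨n, rfl⟩; exact hBone n
      mul' := by
        rintro _ ⟨n, rfl⟩
        exact ⟨Bs (n + 1), ⟨n + 1, rfl⟩, by
          rintro _ ⟨a, ha, b, hb, rfl⟩; exact hBmul n a ha b hb⟩
      inv' := by
        rintro _ ⟨n, rfl⟩
        exact ⟨Bs n, ⟨n, rfl⟩, fun g hg => hBinv n g hg⟩
      conj' := by
        rintro x₀ _ ⟨n, rfl⟩
        exact ⟨Bs n, ⟨n, rfl⟩, fun g hg => hBconj n g hg x₀⟩ }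
  -- countable basis of neighborhoods of 1 in the new topology
  have hbasis : (@nhds G fb.topology 1).HasBasis (fun _ : ℕ => True) Bs := by
    refine fb.nhds_one_hasBasis.to_hasBasis ?_ ?_
    · rintro _ ⟨n, rfl⟩
      exact ⟨n, trivial, subset_rfl⟩
    · intro n _
      exact ⟨Bs n, ⟨n, rfl⟩, subset_rfl⟩
  have hcg : (@nhds G fb.topology 1).IsCountablyGenerated := hbasis.isCountablyGenerated
  -- T2 in the new topology
  have ht2 : @T2Space G fb.topology := by
    refine @IsTopologicalGroup.t2Space_of_one_sep G fb.topology _ fb.isTopologicalGroup ?_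
    intro x hx
    obtain ⟨n, hn⟩ := hsepfun x hx
    exact ⟨Bs n, fb.mem_nhds_one ⟨n, rfl⟩, hn⟩
  -- separability in the new topology
  have hdense : @Dense G fb.topology (⋃ n, F n) := by
    refine aux_dense fb _ ?_
    intro x V hV
    obtain ⟨n, rfl⟩ := hV
    exact hDpoint x n
  have hsep : @TopologicalSpace.SeparableSpace G fb.topology :=
    @TopologicalSpace.SeparableSpace.mk G fb.topology
      ⟨⋃ n, F n, Set.countable_iUnion hFc, hdense⟩
  -- continuity of the identity map
  have hcont : @Continuous G G amb fb.topology id := by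
    rw [@continuous_iff_continuousAt G G amb fb.topology id]
    intro x
    have key : Filter.Tendsto id (@nhds G amb x) (@nhds G fb.topology x) := by
      rw [(fb.nhds_hasBasis x).tendsto_right_iff]
      rintro _ ⟨n, rfl⟩
      filter_upwards [hxS x n] with y hy
      exact Set.image_mono (hSsubB n) hy
    exact key
  -- metrizability and second countability
  obtain ⟨hmet, hsc⟩ :=
    @aux_metrizable_secondCountable G _ fb.topology fb.isTopologicalGroup hcg ht2 hsep
  exact @aux_final G _ amb fb.topology fb.isTopologicalGroup hsc hmet hcont
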